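/- For every α > 2, the equation θ·cos²θ + (1 + 3sin²θ)·arctan(sinθ·cosθ/(1 + sin²θ)) = 2·sinθ·cosθ + (π/α)·sin²θ·cos²θ has exactly one solution θ in the open interval (0, π/2). -/

import Mathlib

open Real Set Filter Topology

/-- The defining equation for `θ*_α` in the PhaseLamp analysis. -/
def phaseLampEq (α θ : ℝ) : Prop :=
  θ * Real.cos θ ^ 2 +
      (1 + 3 * Real.sin θ ^ 2) *
        Real.arctan (Real.sin θ * Real.cos θ / (1 + Real.sin θ ^ 2)) =
    2 * Real.sin θ * Real.cos θ +
      (Real.pi / α) * Real.sin θ ^ 2 * Real.cos θ ^ 2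

noncomputable def plA (θ : ℝ) : ℝ :=
  Real.arctan (Real.sin θ * Real.cos θ / (1 + Real.sin θ ^ 2))

noncomputable def plF (α θ : ℝ) : ℝ :=
  θ * Real.cos θ ^ 2 + (1 + 3 * Real.sin θ ^ 2) * plA θ
    - (2 * Real.sin θ * Real.cos θ + (Real.pi / α) * Real.sin θ ^ 2 * Real.cos θ ^ 2)

noncomputable def plG (α θ : ℝ) : ℝ :=
  3 * plA θ - θ - (Real.pi / α) * (Real.cos θ ^ 2 - Real.sin θ ^ 2)

noncomputable def plH (α θ : ℝ) : ℝ :=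
  (2 - 12 * Real.sin θ ^ 2) / (1 + 3 * Real.sin θ ^ 2)
    + 4 * (Real.pi / α) * (Real.sin θ * Real.cos θ)

lemma hasDerivAt_plA (θ : ℝ) :
    HasDerivAt plA ((1 - 3 * Real.sin θ ^ 2) / (1 + 3 * Real.sin θ ^ 2)) θ := by
  have hs := Real.hasDerivAt_sin θ
  have hc := Real.hasDerivAt_cos θ
  have hnum : HasDerivAt (fun θ => Real.sin θ * Real.cos θ)
      (Real.cos θ ^ 2 - Real.sin θ ^ 2) θ := by
    have := hs.mul hc; exact this.congr_deriv (by ring)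
  have hden : HasDerivAt (fun θ => 1 + Real.sin θ ^ 2)
      (2 * Real.sin θ * Real.cos θ) θ := by
    have := (hs.pow 2).const_add 1; exact this.congr_deriv (by push_cast; ring)
  have hdpos : (0:ℝ) < 1 + Real.sin θ ^ 2 := by positivity
  have hu := hnum.div hden hdpos.ne'
  have h2 := (Real.hasDerivAt_arctan
      (Real.sin θ * Real.cos θ / (1 + Real.sin θ ^ 2))).comp θ hu
  refine h2.congr_deriv ?_
  set s := Real.sin θ; set c := Real.cos θ
  have h : s ^ 2 + c ^ 2 = 1 := Real.sin_sq_add_cos_sq θ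
  have h4 : (0:ℝ) < 1+(s*c/(1+s^2))^2 := by positivity
  have h3 : (0:ℝ) < 1+3*s^2 := by positivity
  field_simp
  linear_combination (1+s^2) * h

lemma hasDerivAt_plF (α θ : ℝ) :
    HasDerivAt (plF α) (2 * Real.sin θ * Real.cos θ * plG α θ) θ := by
  have hs := Real.hasDerivAt_sin θ
  have hc := Real.hasDerivAt_cos θ
  have hA := hasDerivAt_plA θ
  have h1 : HasDerivAt (fun θ : ℝ => θ * Real.cos θ ^ 2)
      (Real.cos θ ^ 2 + θ * (2 * Real.cos θ * (-Real.sin θ))) θ :=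
    (hasDerivAt_id θ).mul (hc.pow 2) |>.congr_deriv (by simp only [id_eq, Pi.pow_apply]; ring)
  have h2 : HasDerivAt (fun θ => (1 + 3 * Real.sin θ ^ 2) * plA θ)
      ((6 * Real.sin θ * Real.cos θ) * plA θ
        + (1 + 3 * Real.sin θ ^ 2) * ((1 - 3 * Real.sin θ ^ 2) / (1 + 3 * Real.sin θ ^ 2))) θ := by
    have hden : HasDerivAt (fun θ => 1 + 3 * Real.sin θ ^ 2)
        (6 * Real.sin θ * Real.cos θ) θ := by
      have := ((hs.pow 2).const_mul 3).const_add 1; exact this.congr_deriv (by push_cast; ring)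
    exact hden.mul hA
  have h3 : HasDerivAt (fun θ => 2 * Real.sin θ * Real.cos θ
        + (Real.pi / α) * Real.sin θ ^ 2 * Real.cos θ ^ 2)
      (2 * (Real.cos θ ^ 2 - Real.sin θ ^ 2)
        + (Real.pi / α) * (2 * Real.sin θ * Real.cos θ ^ 3 - 2 * Real.sin θ ^ 3 * Real.cos θ)) θ := by
    have ha : HasDerivAt (fun θ => 2 * Real.sin θ * Real.cos θ)
        (2 * (Real.cos θ ^ 2 - Real.sin θ ^ 2)) θ := by
      have := (hs.const_mul 2).mul hc; exact this.congr_deriv (by ring)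
    have hb : HasDerivAt (fun θ => (Real.pi / α) * Real.sin θ ^ 2 * Real.cos θ ^ 2)
        ((Real.pi / α) * (2 * Real.sin θ * Real.cos θ ^ 3 - 2 * Real.sin θ ^ 3 * Real.cos θ)) θ := by
      have := ((hs.pow 2).const_mul (Real.pi / α)).mul (hc.pow 2)
      refine this.congr_deriv ?_
      simp only [Pi.pow_apply]; push_cast; ring
    exact ha.add hb
  have := (h1.add h2).sub h3
  have hE : plF α = fun θ => (θ * Real.cos θ ^ 2 + (1 + 3 * Real.sin θ ^ 2) * plA θ)
      - (2 * Real.sin θ * Real.cos θ + (Real.pi / α) * Real.sin θ ^ 2 * Real.cos θ ^ 2) := rfl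
  rw [hE]
  refine this.congr_deriv ?_
  have h : Real.sin θ ^ 2 + Real.cos θ ^ 2 = 1 := Real.sin_sq_add_cos_sq θ
  have h3' : (0:ℝ) < 1 + 3 * Real.sin θ ^ 2 := by positivity
  unfold plG
  field_simp
  ring_nf
  nlinarith [h]

lemma hasDerivAt_plG (α θ : ℝ) :
    HasDerivAt (plG α) (plH α θ) θ := by
  have hs := Real.hasDerivAt_sin θ
  have hc := Real.hasDerivAt_cos θ
  have hA := hasDerivAt_plA θ
  have h1 : HasDerivAt (fun θ => (Real.pi / α) * (Real.cos θ ^ 2 - Real.sin θ ^ 2))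
      ((Real.pi / α) * (-4 * Real.sin θ * Real.cos θ)) θ := by
    have := (((hc.pow 2).sub (hs.pow 2)).const_mul (Real.pi / α))
    refine this.congr_deriv ?_; push_cast; ring
  have := ((hA.const_mul 3).sub (hasDerivAt_id θ)).sub h1
  have hE : plG α = fun θ => (3 * plA θ - θ)
      - (Real.pi / α) * (Real.cos θ ^ 2 - Real.sin θ ^ 2) := rfl
  rw [hE]
  refine this.congr_deriv ?_
  unfold plH
  have h3' : (0:ℝ) < 1 + 3 * Real.sin θ ^ 2 := by positivity
  field_simp
  ring

lemma hasDerivAt_plH (α θ : ℝ) :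
    HasDerivAt (plH α)
      (-36 * Real.sin θ * Real.cos θ / (1 + 3 * Real.sin θ ^ 2) ^ 2
        + 4 * (Real.pi / α) * (Real.cos θ ^ 2 - Real.sin θ ^ 2)) θ := by
  have hs := Real.hasDerivAt_sin θ
  have hc := Real.hasDerivAt_cos θ
  have hdpos : (0:ℝ) < 1 + 3 * Real.sin θ ^ 2 := by positivity
  have hnum : HasDerivAt (fun θ => 2 - 12 * Real.sin θ ^ 2)
      (-24 * Real.sin θ * Real.cos θ) θ := by
    have := ((hs.pow 2).const_mul 12).const_sub 2; exact this.congr_deriv (by push_cast; ring)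
  have hden : HasDerivAt (fun θ => 1 + 3 * Real.sin θ ^ 2)
      (6 * Real.sin θ * Real.cos θ) θ := by
    have := ((hs.pow 2).const_mul 3).const_add 1; exact this.congr_deriv (by push_cast; ring)
  have h1 := hnum.div hden hdpos.ne'
  have h2 : HasDerivAt (fun θ => 4 * (Real.pi / α) * (Real.sin θ * Real.cos θ))
      (4 * (Real.pi / α) * (Real.cos θ ^ 2 - Real.sin θ ^ 2)) θ := by
    have hm : HasDerivAt (fun θ => Real.sin θ * Real.cos θ)
        (Real.cos θ ^ 2 - Real.sin θ ^ 2) θ := by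
      have := hs.mul hc; exact this.congr_deriv (by ring)
    exact hm.const_mul _
  have := h1.add h2
  have hE : plH α = fun θ => (2 - 12 * Real.sin θ ^ 2) / (1 + 3 * Real.sin θ ^ 2)
      + 4 * (Real.pi / α) * (Real.sin θ * Real.cos θ) := rfl
  rw [hE]
  refine this.congr_deriv ?_
  field_simp
  ring

lemma sign_change {F : ℝ → ℝ} {p q : ℝ} (hpq : p < q)
    (hc : ContinuousOn F (Set.Icc p q))
    (hp : 0 < F p) (hq : F q < 0)
    (hz : ∀ x ∈ Set.Ioo p q, F x = 0 → ∃ d, d < 0 ∧ HasDerivAt F d x) :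
    ∃ z ∈ Set.Ioo p q, F z = 0 ∧ (∀ x ∈ Set.Ico p z, 0 < F x) ∧
      ∀ x ∈ Set.Ioc z q, F x < 0 := by
  set S := Set.Icc p q ∩ F ⁻¹' Set.Iic 0 with hS
  have hSclosed : IsClosed S := hc.preimage_isClosed_of_isClosed isClosed_Icc isClosed_Iic
  have hSne : q ∈ S := ⟨⟨hpq.le, le_refl q⟩, hq.le⟩
  have hSbdd : BddBelow S := ⟨p, fun x hx => hx.1.1⟩
  set z := sInf S with hzdef
  have hzS : z ∈ S := hSclosed.csInf_mem ⟨q, hSne⟩ hSbdd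
  have hzp : p < z := lt_of_le_of_ne hzS.1.1 (by
    intro h; rw [← h] at hzS; exact absurd hzS.2 (not_le.2 hp))
  have hleft : ∀ x ∈ Set.Ico p z, 0 < F x := by
    intro x hx
    by_contra h; push_neg at h
    have hxS : x ∈ S := ⟨⟨hx.1, hx.2.le.trans hzS.1.2⟩, h⟩
    exact absurd (csInf_le hSbdd hxS) (not_le.2 hx.2)
  have hFz : F z = 0 := by
    by_contra hne
    have hlt : F z < 0 := lt_of_le_of_ne hzS.2 hne
    have hcz : Filter.Tendsto F (nhdsWithin z (Set.Icc p q)) (nhds (F z)) := hc z hzS.1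
    have hev : ∀ᶠ x in nhdsWithin z (Set.Icc p q), F x < 0 := hcz.eventually_lt_const hlt
    have hmono : nhdsWithin z (Set.Ioo p z) ≤ nhdsWithin z (Set.Icc p q) :=
      nhdsWithin_mono z (fun x hx => ⟨hx.1.le, hx.2.le.trans hzS.1.2⟩)
    have hnebot : (nhdsWithin z (Set.Ioo p z)).NeBot := by
      refine mem_closure_iff_nhdsWithin_neBot.mp ?_
      rw [closure_Ioo hzp.ne]
      exact ⟨hzp.le, le_refl z⟩
    obtain ⟨x, hx1, hx2⟩ := ((hev.filter_mono hmono).and eventually_mem_nhdsWithin).exists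
    have hxS : x ∈ S := ⟨⟨hx2.1.le, hx2.2.le.trans hzS.1.2⟩, hx1.le⟩
    exact absurd (csInf_le hSbdd hxS) (not_le.2 hx2.2)
  have hzq : z < q := lt_of_le_of_ne hzS.1.2 (by
    intro h; rw [← h, hFz] at hq; exact lt_irrefl _ hq)
  have hzIoo : z ∈ Set.Ioo p q := ⟨hzp, hzq⟩
  obtain ⟨d, hd, hder⟩ := hz z hzIoo hFz
  have hslopeR : Filter.Tendsto (slope F z) (nhdsWithin z (Set.Ioi z)) (nhds d) :=
    (hasDerivAt_iff_tendsto_slope.mp hder).mono_left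
      (nhdsWithin_mono z (fun x hx => Set.mem_compl_singleton_iff.mpr (ne_of_gt hx)))
  have hevR : ∀ᶠ x in nhdsWithin z (Set.Ioi z), F x < 0 := by
    have h1 : ∀ᶠ x in nhdsWithin z (Set.Ioi z), slope F z x < 0 :=
      hslopeR.eventually_lt_const hd
    filter_upwards [h1, eventually_mem_nhdsWithin] with x hx hxz
    rw [slope_def_field, hFz, sub_zero] at hx
    rcases div_neg_iff.mp hx with ⟨_, h2⟩ | ⟨h1', _⟩
    · exfalso; simp only [Set.mem_Ioi] at hxz; linarith
    · exact h1'
  have hright : ∀ x ∈ Set.Ioc z q, F x < 0 := by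
    by_contra hcon; push_neg at hcon
    obtain ⟨y, hy, hFy⟩ := hcon
    have hIoo : Set.Ioo z y ∈ nhdsWithin z (Set.Ioi z) :=
      Ioo_mem_nhdsGT_of_mem ⟨le_refl z, hy.1⟩
    obtain ⟨z', hz'1, hz'2⟩ :=
      (hevR.and (Filter.eventually_of_mem hIoo (fun x hx => hx))).exists
    set T := Set.Icc z' y ∩ F ⁻¹' Set.Ici 0 with hT
    have hsub : Set.Icc z' y ⊆ Set.Icc p q :=
      Set.Icc_subset_Icc (hzp.trans hz'2.1).le hy.2
    have hTclosed : IsClosed T :=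
      (hc.mono hsub).preimage_isClosed_of_isClosed isClosed_Icc isClosed_Ici
    have hTne : y ∈ T := ⟨⟨hz'2.2.le, le_refl y⟩, hFy⟩
    have hTbdd : BddBelow T := ⟨z', fun x hx => hx.1.1⟩
    set w := sInf T with hwdef
    have hwT : w ∈ T := hTclosed.csInf_mem ⟨y, hTne⟩ hTbdd
    have hz'w : z' < w := lt_of_le_of_ne hwT.1.1 (by
      intro h; rw [← h] at hwT; exact absurd hwT.2 (not_le.2 hz'1))
    have hmid : ∀ x ∈ Set.Ico z' w, F x < 0 := by
      intro x hx
      by_contra h; push_neg at h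
      have hxT : x ∈ T := ⟨⟨hx.1, hx.2.le.trans hwT.1.2⟩, h⟩
      exact absurd (csInf_le hTbdd hxT) (not_le.2 hx.2)
    have hwIcc : w ∈ Set.Icc p q := hsub ⟨hz'w.le, hwT.1.2⟩
    have hFw : F w = 0 := by
      by_contra hne
      have hgt : 0 < F w := lt_of_le_of_ne hwT.2 (Ne.symm hne)
      have hcw : Filter.Tendsto F (nhdsWithin w (Set.Icc p q)) (nhds (F w)) := hc w hwIcc
      have hev2 : ∀ᶠ x in nhdsWithin w (Set.Icc p q), 0 < F x := hcw.eventually_const_lt hgt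
      have hmono2 : nhdsWithin w (Set.Ioo z' w) ≤ nhdsWithin w (Set.Icc p q) :=
        nhdsWithin_mono w (fun x hx => hsub ⟨hx.1.le, hx.2.le.trans hwT.1.2⟩)
      have hnebot2 : (nhdsWithin w (Set.Ioo z' w)).NeBot := by
        refine mem_closure_iff_nhdsWithin_neBot.mp ?_
        rw [closure_Ioo hz'w.ne]
        exact ⟨hz'w.le, le_refl w⟩
      obtain ⟨x, hx1, hx2⟩ :=
        ((hev2.filter_mono hmono2).and eventually_mem_nhdsWithin).exists
      exact absurd hx1 (not_lt.2 (hmid x ⟨hx2.1.le, hx2.2⟩).le)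
    have hwIoo : w ∈ Set.Ioo p q := by
      refine ⟨hzp.trans (hz'2.1.trans_le hwT.1.1), lt_of_le_of_ne (hwT.1.2.trans hy.2) ?_⟩
      intro h; rw [← h, hFw] at hq; exact lt_irrefl _ hq
    obtain ⟨d', hd', hder'⟩ := hz w hwIoo hFw
    have hslopeL : Filter.Tendsto (slope F w) (nhdsWithin w (Set.Iio w)) (nhds d') :=
      (hasDerivAt_iff_tendsto_slope.mp hder').mono_left
        (nhdsWithin_mono w (fun x hx => Set.mem_compl_singleton_iff.mpr (ne_of_lt hx)))
    have hevL : ∀ᶠ x in nhdsWithin w (Set.Iio w), 0 ≤ slope F w x := by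
      have hIoo2 : Set.Ioo z' w ∈ nhdsWithin w (Set.Iio w) :=
        Ioo_mem_nhdsLT_of_mem ⟨hz'w, le_refl w⟩
      filter_upwards [Filter.eventually_of_mem hIoo2 (fun x hx => hx)] with x hx
      rw [slope_def_field, hFw, sub_zero]
      have h1 : F x < 0 := hmid x ⟨hx.1.le, hx.2⟩
      have h2 : x - w < 0 := sub_neg.2 hx.2
      exact (div_pos_of_neg_of_neg h1 h2).le
    have : 0 ≤ d' := ge_of_tendsto hslopeL hevL
    linarith
  exact ⟨z, hzIoo, hFz, hleft, hright⟩

lemma plH_sign (α : ℝ) (hα : 2 < α) :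
    ∃ z ∈ Set.Ioo 0 (Real.pi/2), plH α z = 0 ∧
      (∀ x ∈ Set.Ico 0 z, 0 < plH α x) ∧ ∀ x ∈ Set.Ioc z (Real.pi/2), plH α x < 0 := by
  have hπ := Real.pi_pos
  have hcont : Continuous (plH α) :=
    continuous_iff_continuousAt.mpr fun x => (hasDerivAt_plH α x).continuousAt
  refine sign_change (by linarith) hcont.continuousOn ?_ ?_ ?_
  · simp [plH]
  · simp [plH, Real.sin_pi_div_two, Real.cos_pi_div_two]
    norm_num
  · intro x hx h0
    refine ⟨_, ?_, hasDerivAt_plH α x⟩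
    set s := Real.sin x
    set c := Real.cos x
    set P := Real.pi / α with hPdef
    have hs : 0 < s := Real.sin_pos_of_pos_of_lt_pi hx.1 (by linarith [hx.2])
    have hc : 0 < c := Real.cos_pos_of_mem_Ioo ⟨by linarith [hx.1], hx.2⟩
    have hpy : s^2 + c^2 = 1 := Real.sin_sq_add_cos_sq x
    have hPpos : 0 < P := div_pos hπ (by linarith)
    have h0' : (2 - 12*s^2)/(1+3*s^2) + 4*P*(s*c) = 0 := h0
    show -36 * s * c / (1 + 3 * s ^ 2) ^ 2 + 4 * P * (c ^ 2 - s ^ 2) < 0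
    have hden : (0:ℝ) < 1+3*s^2 := by positivity
    have key : 4*P*(s*c)*(1+3*s^2) = 12*s^2-2 := by
      field_simp at h0'
      linarith
    have hM : (0:ℝ) < s*c*(1+3*s^2)^2 := by positivity
    have hP' : 4*P = (12*s^2-2)/(s*c*(1+3*s^2)) := by
      rw [eq_div_iff (by positivity)]
      linear_combination key
    have hexpr : -36*s*c/(1+3*s^2)^2 + 4*P*(c^2-s^2)
        = (-36*s^2*c^2 + (c^2-s^2)*(1+3*s^2)*(12*s^2-2)) / (s*c*(1+3*s^2)^2) := by
      rw [show 4*P*(c^2-s^2) = (c^2-s^2) * (4*P) by ring, hP']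
      field_simp
    have hc2 : c^2 = 1 - s^2 := by linarith
    have hQ : -36*s^2*c^2 + (c^2-s^2)*(1+3*s^2)*(12*s^2-2) < 0 := by
      rw [hc2]
      nlinarith [mul_nonneg (sq_nonneg (12*s^2-5)) (sq_nonneg s), sq_nonneg s, pow_pos hs 2]
    calc -36 * s * c / (1 + 3 * s ^ 2) ^ 2 + 4 * P * (c ^ 2 - s ^ 2)
        = (-36*s^2*c^2 + (c^2-s^2)*(1+3*s^2)*(12*s^2-2)) / (s*c*(1+3*s^2)^2) := hexpr
      _ < 0 := div_neg_of_neg_of_pos hQ hM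

lemma plG_zero (α : ℝ) (hα : 2 < α) : plG α 0 < 0 := by
  have hπ := Real.pi_pos
  have : plG α 0 = -(Real.pi/α) := by simp [plG, plA]
  rw [this]
  have : 0 < Real.pi / α := div_pos hπ (by linarith)
  linarith

lemma plG_pi_div_two (α : ℝ) (hα : 2 < α) : plG α (Real.pi/2) < 0 := by
  have hπ := Real.pi_pos
  have h : plG α (Real.pi/2) = Real.pi/α - Real.pi/2 := by
    simp [plG, plA, Real.sin_pi_div_two, Real.cos_pi_div_two]
    ring
  rw [h]
  have : Real.pi / α < Real.pi / 2 := by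
    rw [div_lt_div_iff₀ (by linarith) (by norm_num)]
    nlinarith
  linarith

lemma plG_pi_div_four (α : ℝ) (hα : 2 < α) : 0 < plG α (Real.pi/4) := by
  have hA : plA (Real.pi/4) = Real.arctan (1/3) := by
    unfold plA
    rw [Real.sin_pi_div_four, Real.cos_pi_div_four]
    have h2 : Real.sqrt 2 ^ 2 = 2 := Real.sq_sqrt (by norm_num)
    congr 1
    rw [div_pow, h2]
    rw [show Real.sqrt 2 / 2 * (Real.sqrt 2 / 2) = Real.sqrt 2 ^ 2 / 4 by ring, h2]
    norm_num
  have hcs : Real.cos (Real.pi/4) ^ 2 - Real.sin (Real.pi/4) ^ 2 = 0 := by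
    rw [Real.sin_pi_div_four, Real.cos_pi_div_four]; ring
  have hval : plG α (Real.pi/4) = 3 * Real.arctan (1/3) - Real.pi/4 := by
    unfold plG
    rw [hA, hcs]; ring
  rw [hval]
  have h1 : Real.arctan (1/3) + Real.arctan (1/3) = Real.arctan (3/4) := by
    rw [Real.arctan_add (by norm_num)]
    norm_num
  have h2 : Real.arctan (3/4) + Real.arctan (1/3) = Real.arctan (13/9) := by
    rw [Real.arctan_add (by norm_num)]
    norm_num
  have h3 : Real.arctan 1 < Real.arctan (13/9) := Real.arctan_strictMono (by norm_num)
  rw [Real.arctan_one] at h3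
  linarith

lemma plF_zero (α : ℝ) : plF α 0 = 0 := by simp [plF, plA]

lemma plF_pi_div_two (α : ℝ) : plF α (Real.pi/2) = 0 := by
  simp [plF, plA, Real.sin_pi_div_two, Real.cos_pi_div_two]

theorem phaseLampEq_existsUnique_solution (α : ℝ) (hα : 2 < α) :
    ∃! θ : ℝ, θ ∈ Set.Ioo 0 (Real.pi / 2) ∧ phaseLampEq α θ := by
  have hπ := Real.pi_pos
  have hGcont : Continuous (plG α) :=
    continuous_iff_continuousAt.mpr fun x => (hasDerivAt_plG α x).continuousAt
  have hFcont : Continuous (plF α) :=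
    continuous_iff_continuousAt.mpr fun x => (hasDerivAt_plF α x).continuousAt
  obtain ⟨z, hzIoo, hHz, hHpos, hHneg⟩ := plH_sign α hα
  -- G is strictly monotone on [0,z], strictly antitone on [z,π/2]
  have hGmono : StrictMonoOn (plG α) (Set.Icc 0 z) := by
    refine strictMonoOn_of_deriv_pos (convex_Icc 0 z) hGcont.continuousOn ?_
    intro x hx
    rw [interior_Icc] at hx
    rw [(hasDerivAt_plG α x).deriv]
    exact hHpos x ⟨hx.1.le, hx.2⟩
  have hGanti : StrictAntiOn (plG α) (Set.Icc z (Real.pi/2)) := by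
    refine strictAntiOn_of_deriv_neg (convex_Icc z (Real.pi/2)) hGcont.continuousOn ?_
    intro x hx
    rw [interior_Icc] at hx
    rw [(hasDerivAt_plG α x).deriv]
    exact hHneg x ⟨hx.1, hx.2.le⟩
  -- G z > 0
  have hGz : 0 < plG α z := by
    have h4 := plG_pi_div_four α hα
    have hq4 : 0 < Real.pi/4 := by linarith
    rcases le_or_gt (Real.pi/4) z with hle | hlt
    · have := hGmono.monotoneOn ⟨hq4.le, hle⟩ ⟨hzIoo.1.le, le_refl z⟩ hle
      linarith
    · have := hGanti.antitoneOn ⟨le_refl z, hzIoo.2.le⟩ ⟨hlt.le, by linarith⟩ hlt.le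
      linarith
  -- find a ∈ (0,z) with G a = 0
  obtain ⟨a, haI, hGa⟩ := intermediate_value_Icc hzIoo.1.le
    (hGcont.continuousOn (s := Set.Icc 0 z)) ⟨(plG_zero α hα).le, hGz.le⟩
  have haIoo : a ∈ Set.Ioo 0 z := by
    constructor
    · refine lt_of_le_of_ne haI.1 ?_
      intro h; rw [← h] at hGa; have := plG_zero α hα; rw [hGa] at this; exact lt_irrefl _ this
    · refine lt_of_le_of_ne haI.2 ?_
      intro h; rw [h] at hGa; rw [hGa] at hGz; exact lt_irrefl _ hGz
  -- find b ∈ (z,π/2) with G b = 0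
  obtain ⟨b, hbI, hGb⟩ := intermediate_value_Icc' hzIoo.2.le
    (hGcont.continuousOn (s := Set.Icc z (Real.pi/2)))
    ⟨(plG_pi_div_two α hα).le, hGz.le⟩
  have hbIoo : b ∈ Set.Ioo z (Real.pi/2) := by
    constructor
    · refine lt_of_le_of_ne hbI.1 ?_
      intro h; rw [h, hGb] at hGz; exact lt_irrefl _ hGz
    · refine lt_of_le_of_ne hbI.2 ?_
      intro h; rw [h] at hGb; have := plG_pi_div_two α hα; rw [hGb] at this; exact lt_irrefl _ this
  have hab : a < b := haIoo.2.trans hbIoo.1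
  have ha0 : 0 < a := haIoo.1
  have hb2 : b < Real.pi/2 := hbIoo.2
  -- sign of G
  have hGneg1 : ∀ x ∈ Set.Ioo 0 a, plG α x < 0 := by
    intro x hx
    have := hGmono ⟨hx.1.le, (hx.2.trans haIoo.2).le⟩ ⟨haIoo.1.le, haIoo.2.le⟩ hx.2
    rwa [hGa] at this
  have hGpos : ∀ x ∈ Set.Ioo a b, 0 < plG α x := by
    intro x hx
    rcases le_or_gt x z with hxz | hxz
    · have := hGmono ⟨haIoo.1.le, haIoo.2.le⟩ ⟨(ha0.trans hx.1).le, hxz⟩ hx.1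
      rwa [hGa] at this
    · have := hGanti ⟨hxz.le, (hx.2.trans hb2).le⟩ ⟨hbIoo.1.le, hb2.le⟩ hx.2
      rwa [hGb] at this
  have hGneg2 : ∀ x ∈ Set.Ioo b (Real.pi/2), plG α x < 0 := by
    intro x hx
    have := hGanti ⟨hbIoo.1.le, hb2.le⟩ ⟨(hbIoo.1.trans hx.1).le, hx.2.le⟩ hx.1
    rwa [hGb] at this
  -- sin·cos positivity
  have hsc : ∀ x ∈ Set.Ioo 0 (Real.pi/2), 0 < 2 * Real.sin x * Real.cos x := by
    intro x hx
    have hs : 0 < Real.sin x := Real.sin_pos_of_pos_of_lt_pi hx.1 (by linarith [hx.2])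
    have hcx : 0 < Real.cos x := Real.cos_pos_of_mem_Ioo ⟨by linarith [hx.1], hx.2⟩
    positivity
  -- F monotonicity
  have hFanti1 : StrictAntiOn (plF α) (Set.Icc 0 a) := by
    refine strictAntiOn_of_deriv_neg (convex_Icc 0 a) hFcont.continuousOn ?_
    intro x hx
    rw [interior_Icc] at hx
    rw [(hasDerivAt_plF α x).deriv]
    have hx2 : x ∈ Set.Ioo 0 (Real.pi/2) := ⟨hx.1, by linarith [hx.2, haIoo.2, hzIoo.2]⟩
    exact mul_neg_of_pos_of_neg (hsc x hx2) (hGneg1 x hx)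
  have hFmono : StrictMonoOn (plF α) (Set.Icc a b) := by
    refine strictMonoOn_of_deriv_pos (convex_Icc a b) hFcont.continuousOn ?_
    intro x hx
    rw [interior_Icc] at hx
    rw [(hasDerivAt_plF α x).deriv]
    have hx2 : x ∈ Set.Ioo 0 (Real.pi/2) := ⟨ha0.trans hx.1, hx.2.trans hb2⟩
    exact mul_pos (hsc x hx2) (hGpos x hx)
  have hFanti2 : StrictAntiOn (plF α) (Set.Icc b (Real.pi/2)) := by
    refine strictAntiOn_of_deriv_neg (convex_Icc b (Real.pi/2)) hFcont.continuousOn ?_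
    intro x hx
    rw [interior_Icc] at hx
    rw [(hasDerivAt_plF α x).deriv]
    have hx2 : x ∈ Set.Ioo 0 (Real.pi/2) := ⟨hbIoo.1.trans hx.1 |>.trans_le' hzIoo.1.le, hx.2⟩
    exact mul_neg_of_pos_of_neg (hsc x hx2) (hGneg2 x hx)
  have hFa : plF α a < 0 := by
    have := hFanti1 ⟨le_refl 0, ha0.le⟩ ⟨ha0.le, le_refl a⟩ ha0
    rwa [plF_zero] at this
  have hFb : 0 < plF α b := by
    have := hFanti2 ⟨le_refl b, hb2.le⟩ ⟨hb2.le, le_refl _⟩ hb2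
    rwa [plF_pi_div_two] at this
  -- the solution
  obtain ⟨t, htI, hFt⟩ := intermediate_value_Icc hab.le
    (hFcont.continuousOn (s := Set.Icc a b)) ⟨hFa.le, hFb.le⟩
  have htIoo : t ∈ Set.Ioo a b := by
    constructor
    · refine lt_of_le_of_ne htI.1 ?_
      intro h; rw [← h] at hFt; rw [hFt] at hFa; exact lt_irrefl _ hFa
    · refine lt_of_le_of_ne htI.2 ?_
      intro h; rw [h] at hFt; rw [hFt] at hFb; exact lt_irrefl _ hFb
  have heqv : ∀ θ : ℝ, phaseLampEq α θ ↔ plF α θ = 0 := by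
    intro θ
    unfold phaseLampEq plF plA
    rw [sub_eq_zero]
  refine ⟨t, ⟨⟨ha0.trans htIoo.1, htIoo.2.trans hb2⟩, (heqv t).mpr hFt⟩, ?_⟩
  rintro y ⟨hyIoo, hyEq⟩
  have hFy : plF α y = 0 := (heqv y).mp hyEq
  rcases le_or_gt y a with h1 | h1
  · exfalso
    have := hFanti1 ⟨le_refl 0, ha0.le⟩ ⟨hyIoo.1.le, h1⟩ hyIoo.1
    rw [plF_zero, hFy] at this
    exact lt_irrefl _ this
  · rcases le_or_gt b y with h2 | h2
    · exfalso
      have := hFanti2 ⟨h2, hyIoo.2.le⟩ ⟨hb2.le, le_refl _⟩ hyIoo.2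
      rw [plF_pi_div_two, hFy] at this
      exact lt_irrefl _ this
    · exact hFmono.injOn ⟨h1.le, h2.le⟩ ⟨htI.1, htI.2⟩ (by rw [hFy, hFt])
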